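/- Let T be a search tree on a tree G, let U ⊆ V(G) be such that G[U] is connected, let (x,y) be an edge of T with x the parent of y, and let T' be the search tree obtained by rotating (x,y) in T. If both x and y lie in U, then the projection T'[U] is the search tree obtained by rotating the edge (x,y) in T[U]. Otherwise, T'[U] = T[U]. -/

import Mathlib

/-- A rooted tree (or the empty tree) on a subset `supp` of the vertex type `V`,
represented by parent pointers. -/
structure RTree (V : Type) where
  supp : Finset V
  parent : V → Option V
  parent_eq_none : ∀ v ∉ supp, parent v = none
  mem_of_parent : ∀ {v w : V}, parent v = some w → v ∈ supp ∧ w ∈ supp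
  root_unique : ∀ v ∈ supp, ∀ w ∈ supp, parent v = none → parent w = none → v = w
  reaches_root : ∀ v ∈ supp, ∃ r ∈ supp, parent r = none ∧
    Relation.ReflTransGen (fun a b => parent a = some b) v r

namespace RTree

variable {V : Type}

/-- `T.Anc a v` : `a` is an ancestor of `v` in `T` (possibly `a = v`). -/
def Anc (T : RTree V) (a v : V) : Prop :=
  Relation.ReflTransGen (fun x y => T.parent x = some y) v a

/-- `a` is a strict ancestor of `v`. -/
def StrictAnc (T : RTree V) (a v : V) : Prop := a ≠ v ∧ T.Anc a v

/-- The set of vertices of the subtree rooted at `a` (the descendants of `a`). -/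
def descSet (T : RTree V) (a : V) : Set V := {v | T.Anc a v}

/-- The depth of a node: the number of nodes on the path from the root to it
(the root has depth 1). -/
noncomputable def depth (T : RTree V) (v : V) : ℕ := Set.ncard {a | T.Anc a v}

def IsRoot (T : RTree V) (r : V) : Prop := r ∈ T.supp ∧ T.parent r = none

end RTree

/-- The restriction of a graph to a set of vertices (keeping the ambient vertex type). -/
def restrictG {V : Type} (G : SimpleGraph V) (U : Set V) : SimpleGraph V where
  Adj a b := G.Adj a b ∧ a ∈ U ∧ b ∈ U
  symm := ⟨by rintro a b ⟨h, ha, hb⟩; exact ⟨h.symm, hb, ha⟩⟩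
  loopless := ⟨by rintro a ⟨h, _, _⟩; exact G.irrefl h⟩

/-- `T` is a search tree on the induced subgraph `G[U]`: its nodes are the vertices of `U`,
the subtree of every node induces a connected subgraph, and every edge of `G[U]` joins
two comparable nodes of `T`. -/
def IsSTGOn {V : Type} (G : SimpleGraph V) (U : Finset V) (T : RTree V) : Prop :=
  T.supp = U ∧
  (∀ v ∈ U, ((restrictG G ↑U).induce (T.descSet v)).Connected) ∧
  (∀ u v : V, u ∈ U → v ∈ U → G.Adj u v → T.Anc u v ∨ T.Anc v u)

/-- `T` is a search tree on the graph `G`. -/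
def IsSTG {V : Type} [Fintype V] (G : SimpleGraph V) (T : RTree V) : Prop :=
  IsSTGOn G Finset.univ T

/-- `T'` is obtained from `T` by rotating the edge `(p, c)` of `T`, where `p` is
the parent of `c`: `c` replaces `p` (becoming a child of `p`'s former parent, or the
root if `p` was the root), `p` becomes a child of `c`, `p` keeps its other children,
and each child `x` of `c` whose subtree contains a vertex of `G` adjacent to `p`
becomes a child of `p` (the other children of `c` stay children of `c`). -/
def IsRotationAt {V : Type} (G : SimpleGraph V) (T T' : RTree V) (p c : V) : Prop :=
  T.parent c = some p ∧
  T'.supp = T.supp ∧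
  T'.parent c = T.parent p ∧
  T'.parent p = some c ∧
  (∀ x : V, x ≠ p → T.parent x = some c →
    ((∃ u ∈ T.descSet x, G.Adj u p) → T'.parent x = some p) ∧
    (¬(∃ u ∈ T.descSet x, G.Adj u p) → T'.parent x = some c)) ∧
  (∀ x : V, x ≠ c → x ≠ p → T.parent x ≠ some c → T'.parent x = T.parent x)

/-- `T'` is obtained from `T` by a single rotation. -/
def IsRotation {V : Type} (G : SimpleGraph V) (T T' : RTree V) : Prop :=
  ∃ p c, IsRotationAt G T T' p c

/-- `T2` can be obtained from `T1` by exactly `k` rotations. -/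
def ReachesIn {V : Type} (G : SimpleGraph V) : ℕ → RTree V → RTree V → Prop
  | 0, T1, T2 => T1 = T2
  | k+1, T1, T2 => ∃ T', IsRotation G T1 T' ∧ ReachesIn G k T' T2

/-- Vertex type of the caterpillar `C(m_1, …, m_n)`: spine vertices `inl i` and
leg vertices `inr ⟨i, j⟩`. -/
abbrev CatV (n : ℕ) (m : Fin n → ℕ) : Type := Fin n ⊕ (Σ i : Fin n, Fin (m i))

/-- The caterpillar tree `C(m_1, …, m_n)`: the spine `s_1 - s_2 - ⋯ - s_n` is a path,
and leg `ℓ_{i,j}` is adjacent to `s_i`. -/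
def caterpillar (n : ℕ) (m : Fin n → ℕ) : SimpleGraph (CatV n m) where
  Adj x y :=
    match x, y with
    | Sum.inl i, Sum.inl j => i.val + 1 = j.val ∨ j.val + 1 = i.val
    | Sum.inl i, Sum.inr l => l.1 = i
    | Sum.inr l, Sum.inl i => l.1 = i
    | Sum.inr _, Sum.inr _ => False
  symm := ⟨by rintro (i | l) (j | l') h <;> simp_all <;> tauto⟩
  loopless := ⟨by rintro (i | l) h <;> simp_all⟩

/-- The (base 2) Shannon entropy `H(m_1, …, m_n) = ∑_{i : m_i > 0} (m_i/m) log (m/m_i)`. -/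
noncomputable def shannonH {n : ℕ} (m : Fin n → ℕ) : ℝ :=
  ∑ i, if 0 < m i then
    ((m i : ℝ) / (∑ j, (m j : ℝ))) * Real.logb 2 ((∑ j, (m j : ℝ)) / (m i : ℝ))
  else 0

/-- The parent function of the search tree `A(S, π)` on the caterpillar: the legs form a
path at the top of the tree, ordered bottom-to-top according to `π`, and the spine nodes
hang below, arranged according to the BST `S`. -/
def AParent {n : ℕ} {m : Fin n → ℕ} (S : RTree (Fin n))
    (π : Fin (∑ i, m i) ≃ (Σ i : Fin n, Fin (m i))) :
    CatV n m → Option (CatV n m) :=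
  fun x => match x with
  | Sum.inl i =>
      match S.parent i with
      | some j => some (Sum.inl j)
      | none => if h : 0 < ∑ i, m i then some (Sum.inr (π ⟨0, h⟩)) else none
  | Sum.inr l =>
      if h : (π.symm l).val + 1 < ∑ i, m i then
        some (Sum.inr (π ⟨(π.symm l).val + 1, h⟩))
      else none

/-- `T = A(S, π)`. -/
def IsA {n : ℕ} {m : Fin n → ℕ} (S : RTree (Fin n))
    (π : Fin (∑ i, m i) ≃ (Σ i : Fin n, Fin (m i))) (T : RTree (CatV n m)) : Prop :=
  T.supp = Finset.univ ∧ T.parent = AParent S π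

/-- The parent function of the search tree `B(S)` on the caterpillar: every leg `ℓ_{i,j}`
is a (childless) child of `s_i`, and the spine nodes are arranged according to `S`. -/
def BParent {n : ℕ} {m : Fin n → ℕ} (S : RTree (Fin n)) :
    CatV n m → Option (CatV n m) :=
  fun x => match x with
  | Sum.inl i => (S.parent i).map Sum.inl
  | Sum.inr l => some (Sum.inl l.1)

/-- `T = B(S)`. -/
def IsB {n : ℕ} {m : Fin n → ℕ} (S : RTree (Fin n)) (T : RTree (CatV n m)) : Prop :=
  T.supp = Finset.univ ∧ T.parent = BParent S

/-- `σ(π)`: the sequence of spine indices obtained from the leg ordering `π` by replacing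
each leg `ℓ_{i,j}` with `i`. -/
def sigmaOf {n : ℕ} {m : Fin n → ℕ}
    (π : Fin (∑ i, m i) ≃ (Σ i : Fin n, Fin (m i))) : List (Fin n) :=
  List.ofFn (fun j => (π j).1)

/-- Every leg node of `T` is bound, i.e. no leg node has a child. -/
def noFreeLegs {n : ℕ} {m : Fin n → ℕ} (T : RTree (CatV n m)) : Prop :=
  ∀ (x : CatV n m) (l : Σ i : Fin n, Fin (m i)), T.parent x ≠ some (Sum.inr l)

open Classical in
/-- The number of adjacent pairs in a list satisfying `P`. -/
noncomputable def pairAlt {α : Type} (P : α → α → Prop) : List α → ℕ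
  | [] => 0
  | [_] => 0
  | a :: b :: t => (if P a b then 1 else 0) + pairAlt P (b :: t)

open Classical in
/-- Wilber's quantity `λ(S, u, σ)`: 0 if `u` has at most one child; otherwise the number
of adjacent pairs in the restriction of `σ` to the subtree of `u` that do not both lie in
the subtree of one child of `u` and are not both equal to `u`. -/
noncomputable def wilberLam {n : ℕ} (S : RTree (Fin n)) (u : Fin n) (σ : List (Fin n)) : ℕ :=
  if (∃ v w : Fin n, v ≠ w ∧ S.parent v = some u ∧ S.parent w = some u) then
    pairAlt (fun x y =>
      ¬((x = u ∧ y = u) ∨ ∃ ch, S.parent ch = some u ∧ S.Anc ch x ∧ S.Anc ch y))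
      (σ.filter (fun x => decide (S.Anc u x)))
  else 0

/-- `λ'(S, u, σ) = λ(S, u, σ)` plus the number of occurrences of `u` in `σ`. -/
noncomputable def wilberLam' {n : ℕ} (S : RTree (Fin n)) (u : Fin n)
    (σ : List (Fin n)) : ℕ :=
  wilberLam S u σ + σ.count u

/-- Wilber's first lower bound `Λ'(S, σ) = ∑_u λ'(S, u, σ)`. -/
noncomputable def wilberL' {n : ℕ} (S : RTree (Fin n)) (σ : List (Fin n)) : ℕ :=
  ∑ u : Fin n, wilberLam' S u σ

/-- `P` is the projection `T[U]` of `T` onto `U`: its nodes are the nodes of `T` in `U`,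
and the parent of `u` in `P` is the nearest strict ancestor of `u` in `T` that lies
in `U` (which is exactly the result of pruning the vertices outside `U` one by one). -/
def IsProjOn {V : Type} [DecidableEq V] (T : RTree V) (U : Finset V) (P : RTree V) : Prop :=
  P.supp = T.supp ∩ U ∧
  ∀ u w : V, P.parent u = some w ↔
    (u ∈ U ∧ w ∈ U ∧ T.StrictAnc w u ∧ ∀ z ∈ U, T.StrictAnc z u → T.Anc z w)

/-- `P` is obtained from `T` by pruning the vertex `v`. -/
def IsPruneOf {V : Type} [DecidableEq V] (T : RTree V) (v : V) (P : RTree V) : Prop :=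
  IsProjOn T (T.supp.erase v) P

/-- `PruneSeq T l P`: `P` is obtained from `T` by successively pruning the
vertices in the list `l`, in order. -/
def PruneSeq {V : Type} [DecidableEq V] : RTree V → List V → RTree V → Prop
  | T, [], P => P = T
  | T, v :: rest, P => ∃ P', IsPruneOf T v P' ∧ PruneSeq P' rest P

/-- The number of alternations (edges whose endpoints get different colors under `f`)
on the path from the root to `z`. -/
noncomputable def altAt {V K : Type} (f : V → K) (T : RTree V) (z : V) : ℕ :=
  Set.ncard {x | T.Anc x z ∧ ∃ y, T.parent x = some y ∧ f x ≠ f y}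

/-- The alternation number of `T` w.r.t. the coloring `f`: the maximum number of
alternations on a root-to-node path. -/
noncomputable def altNum {V K : Type} (f : V → K) (T : RTree V) : ℕ :=
  T.supp.sup (fun z => altAt f T z)


namespace RTree
variable {V : Type} {T : RTree V}


theorem Anc.refl (v : V) : T.Anc v v := Relation.ReflTransGen.refl

theorem Anc.trans {a b c : V} (h1 : T.Anc a b) (h2 : T.Anc b c) : T.Anc a c :=
  Relation.ReflTransGen.trans h2 h1

theorem anc_of_parent {v w : V} (h : T.parent v = some w) : T.Anc w v :=
  Relation.ReflTransGen.single h

theorem Anc.cases {a v : V} (h : T.Anc a v) : a = v ∨ ∃ b, T.parent v = some b ∧ T.Anc a b := by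
  rcases Relation.ReflTransGen.cases_head h with h | ⟨b, hb, h⟩
  · exact Or.inl h.symm
  · exact Or.inr ⟨b, hb, h⟩

theorem Anc.total {a b v : V} (h1 : T.Anc a v) (h2 : T.Anc b v) : T.Anc a b ∨ T.Anc b a := by
  have : Relator.RightUnique (fun x y => T.parent x = some y) := by
    intro x y z hy hz; rw [hy] at hz; exact Option.some.inj hz
  rcases Relation.ReflTransGen.total_of_right_unique this h1 h2 with h | h
  · exact Or.inr h
  · exact Or.inl h

theorem Anc.antisymm {a v : V} (h1 : T.Anc a v) (h2 : T.Anc v a) : a = v := by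
  by_cases hv : v ∈ T.supp
  · obtain ⟨r, _, hrnone, hchain⟩ := T.reaches_root v hv
    have key : ∀ c, Relation.ReflTransGen (fun x y => T.parent x = some y) c r →
        ∀ a, T.Anc a c → T.Anc c a → a = c := by
      intro c hc
      induction hc using Relation.ReflTransGen.head_induction_on with
      | refl =>
        intro a h1 _
        rcases h1.cases with h | ⟨b, hb, _⟩
        · exact h
        · rw [hrnone] at hb; exact absurd hb (by simp)
      | @head c w hcw hwr ih =>
        intro a h1 h2
        rcases h1.cases with h | ⟨b, hb, hab⟩
        · exact h
        · rw [hcw] at hb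
          have hbw : b = w := (Option.some.inj hb).symm
          subst hbw
          have haw : a = b := ih a hab (Relation.ReflTransGen.tail h2 hcw)
          have hcw2 : c = b := ih c (haw ▸ h2) (Relation.ReflTransGen.single hcw)
          rw [haw, hcw2]
    exact key v hchain a h1 h2
  · rcases h1.cases with h | ⟨b, hb, _⟩
    · exact h
    · exact absurd hb (by rw [T.parent_eq_none v hv]; simp)

theorem parent_ne_self (v : V) : T.parent v ≠ some v := by
  intro h
  have hv : v ∈ T.supp := (T.mem_of_parent h).1
  obtain ⟨r, _, hrnone, hchain⟩ := T.reaches_root v hv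
  have key : ∀ c, Relation.ReflTransGen (fun x y => T.parent x = some y) c r →
      T.parent c = some c → c = r := by
    intro c hc
    induction hc using Relation.ReflTransGen.head_induction_on with
    | refl => intro _; rfl
    | @head a b hab hbr ih =>
      intro h'
      rw [h'] at hab
      have hba : b = a := (Option.some.inj hab).symm
      subst hba
      exact ih h'
  have : v = r := key v hchain h
  rw [this, hrnone] at h; exact absurd h (by simp)

theorem StrictAnc.of_parent {v w : V} (h : T.parent v = some w) : T.StrictAnc w v := by
  refine ⟨?_, anc_of_parent h⟩
  intro hwv; subst hwv; exact parent_ne_self _ h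

/-- there is a child of w on the way towards v -/
theorem exists_child {w v : V} (h : T.StrictAnc w v) :
    ∃ z, T.parent z = some w ∧ T.Anc z v := by
  obtain ⟨hne, h⟩ := h
  have key : v = w ∨ ∃ z, T.parent z = some w ∧ T.Anc z v := by
    clear hne
    induction h using Relation.ReflTransGen.head_induction_on with
    | refl => exact Or.inl rfl
    | @head a b hab hbw ih =>
      rcases ih with h | ⟨z, hz1, hz2⟩
      · subst h; exact Or.inr ⟨a, hab, Anc.refl a⟩
      · exact Or.inr ⟨z, hz1, hz2.trans (anc_of_parent hab)⟩
  rcases key with h | h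
  · exact absurd h (Ne.symm hne)
  · exact h

theorem anc_parent_of_strict {w v b : V} (h : T.StrictAnc w v) (hb : T.parent v = some b) :
    T.Anc w b := by
  rcases h.2.cases with h' | ⟨c, hc, hwc⟩
  · exact absurd h' h.1
  · rw [hb] at hc; rwa [← Option.some.inj hc] at hwc

/-- subtrees of distinct siblings are disjoint -/
theorem siblings_disjoint {z1 z2 w v : V} (h1 : T.parent z1 = some w)
    (h2 : T.parent z2 = some w) (a1 : T.Anc z1 v) (a2 : T.Anc z2 v) : z1 = z2 := by
  rcases a1.total a2 with h | h
  · rcases h.cases with h' | ⟨b, hb, hzb⟩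
    · exact h'
    · rw [h2] at hb; rw [← Option.some.inj hb] at hzb
      have : z1 = w := hzb.antisymm (anc_of_parent h1)
      subst this; exact absurd h1 (parent_ne_self z1)
  · rcases h.cases with h' | ⟨b, hb, hzb⟩
    · exact h'.symm
    · rw [h1] at hb; rw [← Option.some.inj hb] at hzb
      have : z2 = w := hzb.antisymm (anc_of_parent h2)
      subst this; exact absurd h2 (parent_ne_self z2)

theorem mem_supp_of_anc {b v : V} (h : T.Anc b v) : b = v ∨ b ∈ T.supp := by
  induction h with
  | refl => exact Or.inl rfl
  | tail _ hstep _ => exact Or.inr (T.mem_of_parent hstep).2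

theorem anc_set_finite (v : V) : {b | T.Anc b v}.Finite := by
  apply Set.Finite.subset ((T.supp.finite_toSet).union (Set.finite_singleton v))
  intro b hb
  rcases mem_supp_of_anc (Set.mem_setOf.mp hb) with h | h
  · exact Or.inr (by simp [h])
  · exact Or.inl (by simpa using h)

theorem depth_lt_of_strictAnc {a v : V} (h : T.StrictAnc a v) : T.depth a < T.depth v := by
  classical
  have hsub : {b | T.Anc b a} ⊂ {b | T.Anc b v} := by
    constructor
    · intro b hb; exact Set.mem_setOf.mpr ((Set.mem_setOf.mp hb).trans h.2)
    · intro hcon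
      have : v ∈ {b | T.Anc b a} := hcon (Set.mem_setOf.mpr (Anc.refl v))
      exact h.1 ((Set.mem_setOf.mp this).antisymm h.2).symm
  exact Set.ncard_lt_ncard hsub (anc_set_finite v)


end RTree

section GraphLemmas


variable {V : Type} [DecidableEq V] {G : SimpleGraph V}

theorem exists_path_in {W : Set V} (hW : (G.induce W).Connected) {a b : V}
    (ha : a ∈ W) (hb : b ∈ W) :
    ∃ p : G.Walk a b, p.IsPath ∧ ∀ v ∈ p.support, v ∈ W := by
  obtain ⟨q⟩ := hW.preconnected ⟨a, ha⟩ ⟨b, hb⟩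
  let q' : G.Walk a b := q.map (SimpleGraph.Embedding.induce W).toHom
  refine ⟨q'.bypass, q'.bypass_isPath, ?_⟩
  intro v hv
  have hv' : v ∈ q'.support := q'.support_bypass_subset hv
  rw [show q'.support = q.support.map _ from SimpleGraph.Walk.support_map _ _] at hv'
  obtain ⟨u, _, rfl⟩ := List.mem_map.mp hv'
  exact u.2

theorem tree_paths_unique (hG : G.IsTree) {a b : V} (p q : G.Walk a b)
    (hp : p.IsPath) (hq : q.IsPath) : p = q := by
  have := SimpleGraph.isAcyclic_iff_path_unique.mp hG.IsAcyclic (⟨p, hp⟩ : G.Path a b) ⟨q, hq⟩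
  exact Subtype.ext_iff.mp this

theorem tree_path_support_in (hG : G.IsTree) {W : Set V} (hW : (G.induce W).Connected)
    {a b : V} (ha : a ∈ W) (hb : b ∈ W) (p : G.Walk a b) (hp : p.IsPath) :
    ∀ v ∈ p.support, v ∈ W := by
  obtain ⟨q, hq, hqW⟩ := exists_path_in hW ha hb
  rw [tree_paths_unique hG p q hp hq]
  exact hqW

theorem walk_cross {S : Set V} {a b : V} (p : G.Walk a b) (ha : a ∈ S) (hb : b ∉ S) :
    ∃ c d, G.Adj c d ∧ c ∈ S ∧ d ∉ S ∧ c ∈ p.support ∧ d ∈ p.support := by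
  induction p with
  | nil => exact absurd ha hb
  | @cons u v w h q ih =>
    by_cases hv : v ∈ S
    · obtain ⟨c, d, h1, h2, h3, h4, h5⟩ := ih hv hb
      exact ⟨c, d, h1, h2, h3, by simp [SimpleGraph.Walk.support_cons, h4],
        by simp [SimpleGraph.Walk.support_cons, h5]⟩
    · exact ⟨u, v, h, ha, hv, by simp [SimpleGraph.Walk.support_cons],
        by simp [SimpleGraph.Walk.support_cons, q.start_mem_support]⟩

/-- if `x ∉ W` is adjacent to the door `u ∈ W`, any path from `x` to a vertex of `W`
passes through `u`, and in fact through `W` only. -/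
theorem door_mem_path (hG : G.IsTree) {W : Set V} (hW : (G.induce W).Connected)
    {x u v : V} (hx : x ∉ W) (hu : u ∈ W) (hadj : G.Adj x u) (hv : v ∈ W)
    (p : G.Walk x v) (hp : p.IsPath) :
    u ∈ p.support ∧ ∀ w ∈ p.support, w = x ∨ w ∈ W := by
  obtain ⟨q, hq, hqW⟩ := exists_path_in hW hu hv
  have hp2 : (SimpleGraph.Walk.cons hadj q).IsPath := by
    rw [SimpleGraph.Walk.cons_isPath_iff]
    exact ⟨hq, fun hmem => hx (hqW x hmem)⟩
  rw [tree_paths_unique hG p (SimpleGraph.Walk.cons hadj q) hp hp2]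
  constructor
  · simp [SimpleGraph.Walk.support_cons, q.start_mem_support]
  · intro w hw
    rw [SimpleGraph.Walk.support_cons] at hw
    rcases List.mem_cons.mp hw with h | h
    · exact Or.inl h
    · exact Or.inr (hqW w h)


end GraphLemmas
section Rotation

open RTree

variable {V : Type} [Fintype V] [DecidableEq V] {G : SimpleGraph V} {T T' : RTree V} {x y : V}

/-- the subtree of `z` contains a vertex adjacent to `x`. -/
def IsMovedSub (G : SimpleGraph V) (T : RTree V) (x z : V) : Prop :=
  ∃ u, T.Anc z u ∧ G.Adj u x

/-- `v` lies in the subtree of a child of `y` that stays below `y` after rotating `(x,y)`. -/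
def InStay (G : SimpleGraph V) (T : RTree V) (x y v : V) : Prop :=
  ∃ z, z ≠ x ∧ T.parent z = some y ∧ ¬ IsMovedSub G T x z ∧ T.Anc z v

/-- characterization of the ancestor relation after rotating `(x,y)`. -/
def AncF (G : SimpleGraph V) (T : RTree V) (x y a v : V) : Prop :=
  (T.Anc a v ∧ ¬(a = x ∧ (v = y ∨ InStay G T x y v))) ∨
  (a = y ∧ T.Anc x v ∧ ¬ T.Anc y v)

section Char

variable (hrot : IsRotationAt G T T' x y)
include hrot

theorem hpc' : T.parent y = some x := hrot.1

theorem xy_ne : x ≠ y := (StrictAnc.of_parent hrot.1).1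

theorem anc_xy : T.Anc x y := anc_of_parent hrot.1

theorem not_anc_yx : ¬ T.Anc y x := fun h => xy_ne hrot ((anc_xy hrot).antisymm h)

theorem px_ne_y : T.parent x ≠ some y := fun h => not_anc_yx hrot (anc_of_parent h)

theorem not_inStay_x : ¬ InStay G T x y x := by
  rintro ⟨z, hzx, hzy, -, hzxanc⟩
  exact not_anc_yx hrot ((anc_of_parent hzy).trans hzxanc)

theorem ancF_refl (v : V) : AncF G T x y v v := by
  left
  refine ⟨Anc.refl v, ?_⟩
  rintro ⟨rfl, h | h⟩
  · exact xy_ne hrot h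
  · exact not_inStay_x hrot h

theorem child_ne_x {z : V} (hz : T.parent z = some y) : z ≠ x := by
  rintro rfl; exact px_ne_y hrot hz

theorem parent'_cases {v b : V} (h : T'.parent v = some b) :
    (v = y ∧ T.parent x = some b) ∨ (v = x ∧ b = y) ∨
    (v ≠ x ∧ T.parent v = some y ∧ IsMovedSub G T x v ∧ b = x) ∨
    (v ≠ x ∧ T.parent v = some y ∧ ¬ IsMovedSub G T x v ∧ b = y) ∨
    (v ≠ x ∧ v ≠ y ∧ T.parent v ≠ some y ∧ T.parent v = some b) := by
  obtain ⟨-, -, hy', hx', hchild, hother⟩ := hrot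
  by_cases hvy : v = y
  · subst hvy; exact Or.inl ⟨rfl, by rw [← hy', h]⟩
  by_cases hvx : v = x
  · subst hvx; refine Or.inr (Or.inl ⟨rfl, ?_⟩); rw [hx'] at h; exact (Option.some.inj h).symm
  by_cases hpv : T.parent v = some y
  · by_cases hm : IsMovedSub G T x v
    · refine Or.inr (Or.inr (Or.inl ⟨hvx, hpv, hm, ?_⟩))
      obtain ⟨hm', -⟩ := hchild v hvx hpv
      rw [hm' hm] at h; exact (Option.some.inj h).symm
    · refine Or.inr (Or.inr (Or.inr (Or.inl ⟨hvx, hpv, hm, ?_⟩)))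
      obtain ⟨-, hm'⟩ := hchild v hvx hpv
      rw [hm' hm] at h; exact (Option.some.inj h).symm
  · exact Or.inr (Or.inr (Or.inr (Or.inr ⟨hvx, hvy, hpv, by rw [← hother v hvy hvx hpv, h]⟩)))

omit hrot in
/-- lifting a `T`-ancestor chain to `T'` when all its intermediate vertices keep
their parents. -/
theorem unch {c a : V}
    (h : T.Anc a c) (hQ : ∀ d, T.Anc d c → T.Anc a d → d ≠ a → T'.parent d = T.parent d) :
    T'.Anc a c := by
  induction h using Relation.ReflTransGen.head_induction_on with
  | refl => exact Anc.refl _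
  | @head c e hstep hrest ih =>
    by_cases hca : c = a
    · subst hca; exact Anc.refl _
    · have hQc : T'.parent c = T.parent c :=
        hQ c (Anc.refl c) (Relation.ReflTransGen.head hstep hrest) hca
      refine Relation.ReflTransGen.head (by rw [hQc]; exact hstep) (ih ?_)
      intro d hd had hda
      exact hQ d (hd.trans (anc_of_parent hstep)) had hda

theorem W2 {a : V} (h : T.StrictAnc a x) : T'.Anc a y := by
  rcases h.2.cases with heq | ⟨b, hb, hab⟩
  · exact absurd heq h.1
  · have hbx : T.Anc b x := anc_of_parent hb
    have hbny : b ≠ y := by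
      rintro rfl; exact px_ne_y hrot hb
    refine Relation.ReflTransGen.head (show T'.parent y = some b by rw [hrot.2.2.1, hb]) ?_
    refine unch hab ?_
    intro d hd had hda
    have hbyanc : T.Anc b y := Anc.trans hbx (anc_xy hrot)
    have hdnx : d ≠ x := by
      intro hdx
      have hbex : b = x := Anc.antisymm hbx (hdx ▸ hd)
      rw [hbex] at hb
      exact parent_ne_self x hb
    have hdny : d ≠ y := by
      intro hdy
      have hbey : b = y := Anc.antisymm hbyanc (hdy ▸ hd)
      rw [hbey] at hb
      exact px_ne_y hrot hb
    refine hrot.2.2.2.2.2 d hdny hdnx ?_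
    intro hpd
    have hyb : T.Anc y b := (anc_of_parent hpd).trans hd
    have hbey : b = y := Anc.antisymm hbyanc hyb
    rw [hbey] at hb
    exact px_ne_y hrot hb

theorem H1' : T'.Anc y x := anc_of_parent hrot.2.2.2.1

theorem unch_in_subtree {z v : V} (hz : T.parent z = some y) (hzv : T.Anc z v) :
    T'.Anc z v := by
  refine unch hzv ?_
  intro d hd hzd hdz
  have hdnx : d ≠ x := by
    rintro rfl
    exact not_anc_yx hrot ((anc_of_parent hz).trans hzd)
  have hdny : d ≠ y := by
    intro hdy
    have hzy : z = y := Anc.antisymm (hdy ▸ hzd) (anc_of_parent hz)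
    rw [← hzy] at hz
    exact parent_ne_self z hz
  refine hrot.2.2.2.2.2 d hdny hdnx ?_
  intro hpd
  exact hdz (siblings_disjoint hpd hz hd (hzd.trans hd))

theorem W1 {v : V} (h : T.Anc x v) : T'.Anc y v := by
  by_cases hvx : v = x
  · subst hvx; exact H1' hrot
  by_cases hvy : v = y
  · subst hvy; exact Anc.refl _
  by_cases hyv : T.Anc y v
  · -- v is strictly below y
    obtain ⟨z, hz, hzv⟩ := exists_child (T := T) ⟨Ne.symm hvy, hyv⟩
    have hzx : z ≠ x := child_ne_x hrot hz
    have h1 : T'.Anc z v := unch_in_subtree hrot hz hzv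
    by_cases hm : IsMovedSub G T x z
    · have hpz : T'.parent z = some x := ((hrot.2.2.2.2.1 z hzx hz).1) hm
      exact ((H1' hrot).trans (anc_of_parent hpz)).trans h1
    · have hpz : T'.parent z = some y := ((hrot.2.2.2.2.1 z hzx hz).2) hm
      exact (anc_of_parent hpz).trans h1
  · -- v is below x but not below y : chain unchanged, then step x → y
    have h1 : T'.Anc x v := by
      refine unch h ?_
      intro d hd hxd hdx
      have hdny : d ≠ y := by rintro rfl; exact hyv hd
      refine hrot.2.2.2.2.2 d hdny hdx ?_
      intro hpd
      exact hyv ((anc_of_parent hpd).trans hd)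
    exact (anc_of_parent (hrot.2.2.2.1)).trans h1

theorem C3 {v : V} (h : T.Anc x v) (hvy : v ≠ y) (hst : ¬ InStay G T x y v) :
    T'.Anc x v := by
  by_cases hvx : v = x
  · subst hvx; exact Anc.refl _
  by_cases hyv : T.Anc y v
  · obtain ⟨z, hz, hzv⟩ := exists_child (T := T) ⟨Ne.symm hvy, hyv⟩
    have hzx : z ≠ x := child_ne_x hrot hz
    have hm : IsMovedSub G T x z := by
      by_contra hm
      exact hst ⟨z, hzx, hz, hm, hzv⟩
    have h1 : T'.Anc z v := unch_in_subtree hrot hz hzv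
    have hpz : T'.parent z = some x := ((hrot.2.2.2.2.1 z hzx hz).1) hm
    exact ((anc_of_parent hpz)).trans h1
  · refine unch h ?_
    intro d hd hxd hdx
    have hdny : d ≠ y := by rintro rfl; exact hyv hd
    refine hrot.2.2.2.2.2 d hdny hdx ?_
    intro hpd
    exact hyv ((anc_of_parent hpd).trans hd)

theorem ancF_to_anc' {a v : V} (h : AncF G T x y a v) : T'.Anc a v := by
  rcases h with ⟨hav, hside⟩ | ⟨hay', hxv, hyv⟩
  · by_cases hxv : T.Anc x v
    · by_cases hax : a = x
      · have hvy : v ≠ y := fun hh => hside ⟨hax, Or.inl hh⟩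
        have hst : ¬ InStay G T x y v := fun hh => hside ⟨hax, Or.inr hh⟩
        rw [hax]
        exact C3 hrot hxv hvy hst
      by_cases hay : a = y
      · rw [hay]; exact W1 hrot hxv
      rcases hav.total hxv with haxanc | hxaanc
      · exact (W2 hrot ⟨hax, haxanc⟩).trans (W1 hrot hxv)
      · -- x is a strict ancestor of a; the chain from v to a is unchanged
        refine unch hav ?_
        intro d hd had hda
        have hdnx : d ≠ x := by
          intro hdx; exact hax (Anc.antisymm (hdx ▸ had) hxaanc)
        have hdny : d ≠ y := by
          intro hdy
          have hay2 : T.Anc a y := hdy ▸ had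
          rcases hay2.cases with hya | ⟨b, hb, hab⟩
          · exact hay hya
          · rw [hrot.1] at hb
            rw [← Option.some.inj hb] at hab
            exact hax (Anc.antisymm hab hxaanc)
        refine hrot.2.2.2.2.2 d hdny hdnx ?_
        intro hpd
        have hay2 : T.Anc a y := by
          rcases had.cases with hda' | ⟨b, hb, hab⟩
          · exact absurd hda'.symm hda
          · rw [hpd] at hb
            rw [← Option.some.inj hb] at hab
            exact hab
        rcases hay2.cases with hya | ⟨b, hb, hab⟩
        · exact hay hya
        · rw [hrot.1] at hb
          rw [← Option.some.inj hb] at hab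
          exact hax (Anc.antisymm hab hxaanc)
    · -- v is not below x at all: chain unchanged
      refine unch hav ?_
      intro d hd had hda
      have hdnx : d ≠ x := by intro hdx; exact hxv (hdx ▸ hd)
      have hdny : d ≠ y := by
        intro hdy; exact hxv ((anc_xy hrot).trans (hdy ▸ hd))
      refine hrot.2.2.2.2.2 d hdny hdnx ?_
      intro hpd
      exact hxv ((anc_xy hrot).trans ((anc_of_parent hpd).trans hd))
  · rw [hay']; exact W1 hrot hxv

theorem ancF_step {v b a : V} (hstep : T'.parent v = some b) (h : AncF G T x y a b) :
    AncF G T x y a v := by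
  rcases parent'_cases hrot hstep with ⟨hvy, hb⟩ | ⟨hvx, hby⟩ |
    ⟨hvx, hpv, hm, hbx⟩ | ⟨hvx, hpv, hm, hby⟩ | ⟨hvx, hvy, hpvy, hpv⟩
  · -- v = y, b = parent of x
    rw [hvy]
    have hbx : T.Anc b x := anc_of_parent hb
    have hby : T.Anc b y := Anc.trans hbx (anc_xy hrot)
    rcases h with ⟨hab, -⟩ | ⟨hay, hxb, -⟩
    · left
      refine ⟨hab.trans hby, ?_⟩
      rintro ⟨hax, -⟩
      have : b = x := Anc.antisymm hbx (hax ▸ hab)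
      rw [this] at hb
      exact parent_ne_self x hb
    · have : x = b := Anc.antisymm hxb hbx
      rw [← this] at hb
      exact absurd hb (parent_ne_self x)
  · -- v = x, b = y
    rw [hvx]; rw [hby] at h
    rcases h with ⟨hay, hside⟩ | ⟨hay, -, -⟩
    · by_cases hayx : a = y
      · rw [hayx]
        exact Or.inr ⟨rfl, Anc.refl x, not_anc_yx hrot⟩
      · rcases hay.cases with hya | ⟨c, hc, hac⟩
        · exact absurd hya hayx
        · rw [hrot.1] at hc
          rw [← Option.some.inj hc] at hac
          left
          refine ⟨hac, ?_⟩
          rintro ⟨-, hh | hh⟩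
          · exact xy_ne hrot hh
          · exact not_inStay_x hrot hh
    · rw [hay]
      exact Or.inr ⟨rfl, Anc.refl x, not_anc_yx hrot⟩
  · -- v moved child of y, b = x
    rw [hbx] at h
    have hyv : T.Anc y v := anc_of_parent hpv
    have hxv : T.Anc x v := (anc_xy hrot).trans hyv
    have hvny : v ≠ y := by
      intro hh
      rw [hh] at hpv
      exact parent_ne_self y hpv
    have hnst : ¬ InStay G T x y v := by
      rintro ⟨z, hzx, hz, hznm, hzv⟩
      have : z = v := siblings_disjoint hz hpv hzv (Anc.refl v)
      rw [this] at hznm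
      exact hznm hm
    rcases h with ⟨hax, -⟩ | ⟨hay, -, -⟩
    · left
      refine ⟨hax.trans hxv, ?_⟩
      rintro ⟨-, hh | hh⟩
      · exact hvny hh
      · exact hnst hh
    · left
      refine ⟨hay ▸ hyv, ?_⟩
      rintro ⟨h1, -⟩
      exact xy_ne hrot (hay ▸ h1 : y = x).symm
  · -- v stay child of y, b = y
    rw [hby] at h
    have hyv : T.Anc y v := anc_of_parent hpv
    rcases h with ⟨hay, hside⟩ | ⟨-, -, hnyy⟩
    · have hanx : a ≠ x := fun hh => hside ⟨hh, Or.inl rfl⟩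
      left
      exact ⟨hay.trans hyv, fun hp => hanx hp.1⟩
    · exact absurd (Anc.refl y) hnyy
  · -- generic case
    have hbny : b ≠ y := by
      intro hh; rw [hh] at hpv; exact hpvy hpv
    rcases h with ⟨hab, hside⟩ | ⟨hay, hxb, hnyb⟩
    · left
      refine ⟨hab.trans (anc_of_parent hpv), ?_⟩
      rintro ⟨hax, hh | hh⟩
      · exact hvy hh
      · obtain ⟨z, hzx, hz, hznm, hzv⟩ := hh
        have hznv : z ≠ v := by
          intro hh2; rw [hh2] at hz; exact hpvy hz
        rcases hzv.cases with h' | ⟨c, hc, hzc⟩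
        · exact hznv h'
        · rw [hpv] at hc
          rw [← Option.some.inj hc] at hzc
          exact hside ⟨hax, Or.inr ⟨z, hzx, hz, hznm, hzc⟩⟩
    · refine Or.inr ⟨hay, hxb.trans (anc_of_parent hpv), ?_⟩
      intro hyv
      rcases hyv.cases with h' | ⟨c, hc, hyc⟩
      · exact hvy h'.symm
      · rw [hpv] at hc
        rw [← Option.some.inj hc] at hyc
        exact hnyb hyc

theorem anc'_iff_ancF {a v : V} : T'.Anc a v ↔ AncF G T x y a v := by
  constructor
  · intro h
    induction h using Relation.ReflTransGen.head_induction_on with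
    | refl => exact ancF_refl hrot a
    | @head c e hstep hrest ih => exact ancF_step hrot hstep ih
  · exact ancF_to_anc' hrot

end Char
end Rotation
section STGLemmas

open RTree

variable {V : Type} [Fintype V] [DecidableEq V] {G : SimpleGraph V} {T : RTree V}

theorem restrictG_univ (G : SimpleGraph V) : restrictG G ↑(Finset.univ : Finset V) = G := by
  ext a b
  simp [restrictG]

theorem stg_conn (hT : IsSTG G T) : ∀ v : V, (G.induce (T.descSet v)).Connected := by
  intro v
  have := hT.2.1 v (Finset.mem_univ v)
  rwa [restrictG_univ] at this

theorem stg_comp (hT : IsSTG G T) : ∀ u v : V, G.Adj u v → T.Anc u v ∨ T.Anc v u :=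
  fun u v h => hT.2.2 u v (Finset.mem_univ u) (Finset.mem_univ v) h

theorem stg_cross (hT : IsSTG G T) {s c d : V} (hc : T.Anc s c) (hd : ¬ T.Anc s d)
    (hadj : G.Adj c d) : T.StrictAnc d s := by
  rcases stg_comp hT c d hadj with h | h
  · exact absurd (hc.trans h) hd
  · rcases Anc.total hc h with h' | h'
    · exact absurd h' hd
    · refine ⟨?_, h'⟩
      rintro rfl
      exact hd (Anc.refl _)

theorem mem_descSet_self (T : RTree V) (v : V) : v ∈ T.descSet v := Anc.refl v

theorem mem_descSet {a v : V} : v ∈ T.descSet a ↔ T.Anc a v := Iff.rfl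

/-- F1 : the parent has a `G`-neighbour inside the subtree of each child. -/
theorem exists_adj_in_child (hG : G.IsTree) (hT : IsSTG G T) {pa c : V}
    (hpc : T.parent c = some pa) : ∃ u, T.Anc c u ∧ G.Adj pa u := by
  have hpanec : pa ≠ c := (StrictAnc.of_parent hpc).1
  obtain ⟨p, hp, hpW⟩ := exists_path_in (stg_conn hT pa) (mem_descSet_self T pa)
    (mem_descSet.mpr (anc_of_parent hpc))
  cases p with
  | nil => exact absurd rfl hpanec
  | @cons _ w _ hadj q =>
    rw [SimpleGraph.Walk.cons_isPath_iff] at hp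
    obtain ⟨hq, hpaq⟩ := hp
    have hw : T.Anc pa w := by
      have := hpW w (by simp [SimpleGraph.Walk.support_cons, q.start_mem_support])
      exact mem_descSet.mp this
    have hwnpa : w ≠ pa := by
      rintro rfl; exact hpaq q.start_mem_support
    obtain ⟨c'', hc''p, hc''w⟩ := exists_child ⟨Ne.symm hwnpa, hw⟩
    by_cases hcc : c'' = c
    · exact ⟨w, hcc ▸ hc''w, hadj⟩
    · exfalso
      have hcnot : c ∉ T.descSet c'' := by
        intro hmem
        exact hcc (siblings_disjoint hc''p hpc (mem_descSet.mp hmem) (Anc.refl c))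
      obtain ⟨c1, d1, hadj1, hc1, hd1, -, hd1mem⟩ :=
        walk_cross (S := T.descSet c'') q (mem_descSet.mpr hc''w) hcnot
      have hstrict : T.StrictAnc d1 c'' :=
        stg_cross hT (mem_descSet.mp hc1) (fun hh => hd1 (mem_descSet.mpr hh)) hadj1
      have hd1pa : T.Anc d1 pa := anc_parent_of_strict hstrict hc''p
      have hpad1 : T.Anc pa d1 := by
        have := hpW d1 (by simp [SimpleGraph.Walk.support_cons, hd1mem])
        exact mem_descSet.mp this
      have : d1 = pa := Anc.antisymm hd1pa hpad1
      rw [this] at hd1mem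
      exact hpaq hd1mem

end STGLemmas

section ProjLemmas

open RTree

variable {V : Type} [Fintype V] [DecidableEq V] {T : RTree V} {U : Finset V} {P : RTree V}

theorem proj_supp (hTs : T.supp = Finset.univ) (hP : IsProjOn T U P) :
    ∀ u : V, u ∈ P.supp ↔ u ∈ U := by
  intro u
  rw [hP.1, hTs]
  simp

theorem proj_anc_imp (hP : IsProjOn T U P) {w u : V} (h : P.Anc w u) : T.Anc w u := by
  induction h with
  | refl => exact Anc.refl _
  | tail hrest hstep ih =>
    exact Anc.trans ((hP.2 _ _).mp hstep).2.2.1.2 ih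

theorem proj_mem (hP : IsProjOn T U P) {w u : V} (h : P.Anc w u) (hne : w ≠ u) :
    u ∈ U ∧ w ∈ U := by
  constructor
  · rcases h.cases with h' | ⟨b, hb, -⟩
    · exact absurd h' hne
    · exact ((hP.2 _ _).mp hb).1
  · induction h with
    | refl => exact absurd rfl hne
    | tail hrest hstep ih => exact ((hP.2 _ _).mp hstep).2.1

theorem nearest_exists (hP : IsProjOn T U P) {u : V} (hu : u ∈ U)
    {w : V} (hw : w ∈ U) (hwu : T.StrictAnc w u) : ∃ m, P.parent u = some m := by
  classical
  let S : Finset V := U.filter (fun z => T.StrictAnc z u)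
  have hSne : S.Nonempty := ⟨w, Finset.mem_filter.mpr ⟨hw, hwu⟩⟩
  obtain ⟨m, hmS, hmax⟩ := S.exists_max_image T.depth hSne
  obtain ⟨hmU, hm⟩ := Finset.mem_filter.mp hmS
  refine ⟨m, (hP.2 u m).mpr ⟨hu, hmU, hm, ?_⟩⟩
  intro z hz hzu
  rcases Anc.total hzu.2 hm.2 with h | h
  · exact h
  · by_cases hzm : m = z
    · rw [hzm]; exact Anc.refl _
    · have : T.depth m < T.depth z := depth_lt_of_strictAnc ⟨hzm, h⟩
      have hle := hmax z (Finset.mem_filter.mpr ⟨hz, hzu⟩)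
      omega

theorem proj_anc_of_anc (hTs : T.supp = Finset.univ) (hP : IsProjOn T U P)
    {u w : V} (hu : u ∈ U) (hw : w ∈ U) (h : T.Anc w u) : P.Anc w u := by
  have humem : u ∈ P.supp := (proj_supp hTs hP u).mpr hu
  obtain ⟨r, -, hrnone, hchain⟩ := P.reaches_root u humem
  have key : ∀ c, Relation.ReflTransGen (fun a b => P.parent a = some b) c r →
      ∀ w', c ∈ U → w' ∈ U → T.Anc w' c → P.Anc w' c := by
    intro c hc
    induction hc using Relation.ReflTransGen.head_induction_on with
    | refl =>
      intro w' hcU hwU hanc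
      by_cases hwc : w' = r
      · rw [hwc]; exact Anc.refl _
      · obtain ⟨m, hm⟩ := nearest_exists hP hcU hwU ⟨hwc, hanc⟩
        rw [hrnone] at hm
        exact absurd hm (by simp)
    | @head c p hstep hrest ih =>
      intro w' hcU hwU hanc
      by_cases hwc : w' = c
      · rw [hwc]; exact Anc.refl _
      · have hdata := (hP.2 c p).mp hstep
        have hwp : T.Anc w' p := hdata.2.2.2 w' hwU ⟨hwc, hanc⟩
        exact Anc.trans (ih w' hdata.2.1 hwU hwp) (anc_of_parent hstep)
  exact key u hchain w hu hw h

theorem proj_child (hTs : T.supp = Finset.univ) (hP : IsProjOn T U P)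
    {u w : V} (hu : u ∈ U) (hw : w ∈ U) (h : T.StrictAnc w u) :
    ∃ z, P.parent z = some w ∧ P.Anc z u :=
  exists_child ⟨h.1, proj_anc_of_anc hTs hP hu hw h.2⟩

theorem parent_proj (hP : IsProjOn T U P) {u w : V} (hu : u ∈ U) (hw : w ∈ U)
    (h : T.parent u = some w) : P.parent u = some w := by
  refine (hP.2 u w).mpr ⟨hu, hw, StrictAnc.of_parent h, ?_⟩
  intro z hz hzu
  exact anc_parent_of_strict hzu h

theorem option_eq_of_some_iff {α : Type*} {o1 o2 : Option α}
    (h : ∀ w, o1 = some w ↔ o2 = some w) : o1 = o2 := by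
  cases o1 with
  | none =>
    cases o2 with
    | none => rfl
    | some w => exact ((h w).mpr rfl)
  | some w => exact ((h w).mp rfl).symm

theorem RTree.ext' {T1 T2 : RTree V} (h1 : T1.supp = T2.supp) (h2 : T1.parent = T2.parent) :
    T1 = T2 := by
  cases T1; cases T2
  simp only at h1 h2
  subst h1; subst h2
  rfl

end ProjLemmas
section Assembly

open RTree

variable {V : Type} [Fintype V] [DecidableEq V] {G : SimpleGraph V}
  {T T' : RTree V} {x y : V} {U : Finset V} {P P' : RTree V}

theorem L_GA1 (hG : G.IsTree) (hT : IsSTG G T) (hU : (G.induce (↑U : Set V)).Connected)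
    (hrot : IsRotationAt G T T' x y) (hxU : x ∈ U) (hyU : y ∉ U) {z₀ u : V}
    (hz₀ : T.parent z₀ = some y) (hnm : ¬ IsMovedSub G T x z₀)
    (hu : u ∈ U) (huz : T.Anc z₀ u) : False := by
  obtain ⟨p, hp, hpU⟩ := exists_path_in hU (Finset.mem_coe.mpr hxU) (Finset.mem_coe.mpr hu)
  have hxdesc : T.Anc x u := (anc_xy hrot).trans ((anc_of_parent hz₀).trans huz)
  have hpdesc : ∀ v ∈ p.support, v ∈ T.descSet x :=
    tree_path_support_in hG (stg_conn hT x) (mem_descSet_self T x) (mem_descSet.mpr hxdesc) p hp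
  have hxnz₀ : x ∉ T.descSet z₀ := by
    intro hmem
    exact not_anc_yx hrot ((anc_of_parent hz₀).trans (mem_descSet.mp hmem))
  obtain ⟨c, d, hadj, hc, hd, hcmem, hdmem⟩ :=
    walk_cross (S := (T.descSet z₀)ᶜ) p hxnz₀ (by simp [mem_descSet.mpr huz])
  have hddesc : d ∈ T.descSet z₀ := by simpa using hd
  have hstrict : T.StrictAnc c z₀ :=
    stg_cross hT (mem_descSet.mp hddesc) (fun hh => hc (mem_descSet.mpr hh)) hadj.symm
  have hcy : T.Anc c y := anc_parent_of_strict hstrict hz₀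
  rcases hcy.cases with h' | ⟨b, hb, hcb⟩
  · rw [h'] at hcmem
    exact hyU (Finset.mem_coe.mp (hpU y hcmem))
  · rw [hrot.1] at hb
    rw [← Option.some.inj hb] at hcb
    have hxc : T.Anc x c := mem_descSet.mp (hpdesc c hcmem)
    have : c = x := Anc.antisymm hcb hxc
    rw [this] at hadj
    exact hnm ⟨d, mem_descSet.mp hddesc, hadj.symm⟩

theorem L_GA2 (hG : G.IsTree) (hT : IsSTG G T) (hU : (G.induce (↑U : Set V)).Connected)
    (hrot : IsRotationAt G T T' x y) (hyU : y ∈ U) (hxU : x ∉ U) {u : V}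
    (hu : u ∈ U) (hxu : T.Anc x u) (hnyu : ¬ T.Anc y u) : False := by
  have hunx : u ≠ x := by rintro rfl; exact hxU hu
  obtain ⟨p, hp, hpU⟩ := exists_path_in hU (Finset.mem_coe.mpr hu) (Finset.mem_coe.mpr hyU)
  have hpdesc : ∀ v ∈ p.support, v ∈ T.descSet x :=
    tree_path_support_in hG (stg_conn hT x) (mem_descSet.mpr hxu)
      (mem_descSet.mpr (anc_xy hrot)) p hp
  obtain ⟨w₁, hw₁, hw₁u⟩ := exists_child ⟨Ne.symm hunx, hxu⟩
  have hynw₁ : y ∉ T.descSet w₁ := by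
    intro hmem
    have hw₁y : T.Anc w₁ y := mem_descSet.mp hmem
    rcases hw₁y.cases with h' | ⟨b, hb, hw₁b⟩
    · rw [h'] at hw₁u; exact hnyu hw₁u
    · rw [hrot.1] at hb
      rw [← Option.some.inj hb] at hw₁b
      have : w₁ = x := Anc.antisymm hw₁b (anc_of_parent hw₁)
      rw [this] at hw₁
      exact parent_ne_self x hw₁
  obtain ⟨e, f, hadj, he, hf, -, hfmem⟩ :=
    walk_cross (S := T.descSet w₁) p (mem_descSet.mpr hw₁u) hynw₁
  have hstrict : T.StrictAnc f w₁ :=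
    stg_cross hT (mem_descSet.mp he) (fun hh => hf (mem_descSet.mpr hh)) hadj
  have hfx : T.Anc f x := anc_parent_of_strict hstrict hw₁
  have hxf : T.Anc x f := mem_descSet.mp (hpdesc f hfmem)
  have : f = x := Anc.antisymm hfx hxf
  rw [this] at hfmem
  exact hxU (Finset.mem_coe.mp (hpU x hfmem))

theorem L_uniq (hG : G.IsTree) (hT : IsSTG G T) (hU : (G.induce (↑U : Set V)).Connected)
    (hP : IsProjOn T U P) {w z z' c : V}
    (hc : T.parent c = some w) (hz : P.parent z = some w) (hz' : P.parent z' = some w)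
    (hzc : T.Anc c z) (hz'c : T.Anc c z') : z = z' := by
  obtain ⟨hzU, hwU, hwz, hminz⟩ := (hP.2 z w).mp hz
  obtain ⟨hz'U, -, hwz', hminz'⟩ := (hP.2 z' w).mp hz'
  by_cases hzz' : z = z'
  · exact hzz'
  exfalso
  have hnocomp : ∀ z1 z2 : V, z1 ≠ z2 → T.StrictAnc w z1 →
      (∀ v ∈ U, T.StrictAnc v z2 → T.Anc v w) → z1 ∈ U → ¬ T.Anc z1 z2 := by
    intro z1 z2 hne hwz1 hmin2 h1U hanc
    have : T.Anc z1 w := hmin2 z1 h1U ⟨hne, hanc⟩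
    exact hwz1.1 (Anc.antisymm hwz1.2 this)
  have h1 : ¬ T.Anc z z' := hnocomp z z' hzz' hwz hminz' hzU
  have h2 : ¬ T.Anc z' z := hnocomp z' z (Ne.symm hzz') hwz' hminz hz'U
  obtain ⟨p, hp, hpU⟩ := exists_path_in hU (Finset.mem_coe.mpr hzU) (Finset.mem_coe.mpr hz'U)
  have hpdesc : ∀ v ∈ p.support, v ∈ T.descSet c :=
    tree_path_support_in hG (stg_conn hT c) (mem_descSet.mpr hzc) (mem_descSet.mpr hz'c) p hp
  obtain ⟨e, d, hadj, he, hd, -, hdmem⟩ :=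
    walk_cross (S := T.descSet z) p (mem_descSet_self T z) (fun hh => h1 (mem_descSet.mp hh))
  have hstrict : T.StrictAnc d z :=
    stg_cross hT (mem_descSet.mp he) (fun hh => hd (mem_descSet.mpr hh)) hadj
  have hdw : T.Anc d w := hminz d (Finset.mem_coe.mp (hpU d hdmem)) hstrict
  have hwd : T.Anc w d := (anc_of_parent hc).trans (mem_descSet.mp (hpdesc d hdmem))
  have : d = w := Anc.antisymm hdw hwd
  rw [this] at hdmem
  have hcw : T.Anc c w := mem_descSet.mp (hpdesc w hdmem)
  have : c = w := Anc.antisymm hcw (anc_of_parent hc)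
  rw [this] at hc
  exact parent_ne_self w hc

theorem L_door (hG : G.IsTree) (hT : IsSTG G T) (hU : (G.induce (↑U : Set V)).Connected)
    (hrot : IsRotationAt G T T' x y) (hP : IsProjOn T U P)
    (hxU : x ∈ U) (hyU : y ∈ U) {z z₀ u₁ : V}
    (hz₀ : T.parent z₀ = some y) (hu₁ : T.Anc z₀ u₁) (hadj : G.Adj u₁ x)
    (hzU : z ∈ U) (hz : P.parent z = some y) (hzdesc : T.Anc z₀ z) :
    ∃ u, u ∈ U ∧ P.Anc z u ∧ G.Adj u x := by
  have hxnz₀ : x ∉ T.descSet z₀ := by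
    intro hmem
    exact not_anc_yx hrot ((anc_of_parent hz₀).trans (mem_descSet.mp hmem))
  obtain ⟨p, hp, hpU⟩ := exists_path_in hU (Finset.mem_coe.mpr hxU) (Finset.mem_coe.mpr hzU)
  obtain ⟨hu₁mem, -⟩ := door_mem_path hG (stg_conn hT z₀) hxnz₀ (mem_descSet.mpr hu₁)
    hadj.symm (mem_descSet.mpr hzdesc) p hp
  have hu₁U : u₁ ∈ U := Finset.mem_coe.mp (hpU u₁ hu₁mem)
  have hyu₁ : T.Anc y u₁ := (anc_of_parent hz₀).trans hu₁
  have hu₁ny : y ≠ u₁ := by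
    intro hh
    have : z₀ = y := Anc.antisymm (hh ▸ hu₁) (anc_of_parent hz₀)
    rw [this] at hz₀
    exact parent_ne_self y hz₀
  obtain ⟨z', hz'py, hz'u₁⟩ := proj_child hT.1 hP hu₁U hyU ⟨hu₁ny, hyu₁⟩
  have hz'u₁T : T.Anc z' u₁ := proj_anc_imp hP hz'u₁
  obtain ⟨-, -, hyz', -⟩ := (hP.2 z' y).mp hz'py
  have hz₀z' : T.Anc z₀ z' := by
    rcases Anc.total hz'u₁T hu₁ with h | h
    · rcases h.cases with h' | ⟨b, hb, hz'b⟩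
      · rw [h']; exact Anc.refl _
      · rw [hz₀] at hb
        rw [← Option.some.inj hb] at hz'b
        exact absurd (Anc.antisymm hz'b hyz'.2).symm hyz'.1
    · exact h
  have : z = z' := L_uniq hG hT hU hP hz₀ hz hz'py hzdesc hz₀z'
  exact ⟨u₁, hu₁U, this ▸ hz'u₁, hadj⟩

end Assembly
section Components

open RTree

variable {V : Type} [Fintype V] [DecidableEq V] {G : SimpleGraph V}
  {T T' : RTree V} {x y : V} {U : Finset V} {P P' : RTree V}

theorem comp3 (hrot : IsRotationAt G T T' x y) (hP : IsProjOn T U P) (hP' : IsProjOn T' U P')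
    (hxU : x ∈ U) (hyU : y ∈ U) : P'.parent y = P.parent x := by
  apply option_eq_of_some_iff
  intro w
  constructor
  · intro h
    obtain ⟨-, hwU, hwy', hmin'⟩ := (hP'.2 y w).mp h
    rcases (anc'_iff_ancF hrot).mp hwy'.2 with ⟨hwyT, hside⟩ | ⟨-, -, hnyy⟩
    swap
    · exact absurd (Anc.refl y) hnyy
    have hwnx : w ≠ x := fun hh => hside ⟨hh, Or.inl rfl⟩
    have hwny : w ≠ y := hwy'.1
    have hwx : T.Anc w x := by
      rcases hwyT.cases with h' | ⟨b, hb, hwb⟩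
      · exact absurd h' hwny
      · rw [hrot.1] at hb; rw [← Option.some.inj hb] at hwb; exact hwb
    refine (hP.2 x w).mpr ⟨hxU, hwU, ⟨hwnx, hwx⟩, ?_⟩
    intro z hz hzx
    have hzy' : T'.StrictAnc z y := by
      refine ⟨?_, (anc'_iff_ancF hrot).mpr (Or.inl
        ⟨Anc.trans hzx.2 (anc_xy hrot), fun hp => hzx.1 hp.1⟩)⟩
      intro hzey
      rw [hzey] at hzx
      exact not_anc_yx hrot hzx.2
    rcases (anc'_iff_ancF hrot).mp (hmin' z hz hzy') with ⟨hzw, -⟩ | ⟨hzy2, -, -⟩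
    · exact hzw
    · exfalso
      rw [hzy2] at hzx
      exact not_anc_yx hrot hzx.2
  · intro h
    obtain ⟨-, hwU, hwx, hmin⟩ := (hP.2 x w).mp h
    refine (hP'.2 y w).mpr ⟨hyU, hwU, ⟨?_, ?_⟩, ?_⟩
    · intro hwy
      rw [hwy] at hwx
      exact not_anc_yx hrot hwx.2
    · exact (anc'_iff_ancF hrot).mpr (Or.inl
        ⟨Anc.trans hwx.2 (anc_xy hrot), fun hp => hwx.1 hp.1⟩)
    · intro z hz hzy'
      rcases (anc'_iff_ancF hrot).mp hzy'.2 with ⟨hzy, hside⟩ | ⟨-, -, hnyy⟩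
      swap
      · exact absurd (Anc.refl y) hnyy
      have hznx : z ≠ x := fun hh => hside ⟨hh, Or.inl rfl⟩
      have hzx : T.Anc z x := by
        rcases hzy.cases with h' | ⟨b, hb, hzb⟩
        · exact absurd h' hzy'.1
        · rw [hrot.1] at hb; rw [← Option.some.inj hb] at hzb; exact hzb
      exact (anc'_iff_ancF hrot).mpr (Or.inl ⟨hmin z hz ⟨hznx, hzx⟩, fun hp => hznx hp.1⟩)

theorem comp5 (hG : G.IsTree) (hT : IsSTG G T) (hU : (G.induce (↑U : Set V)).Connected)
    (hrot : IsRotationAt G T T' x y) (hP : IsProjOn T U P) (hP' : IsProjOn T' U P')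
    (hxU : x ∈ U) (hyU : y ∈ U) :
    ∀ z : V, z ≠ x → P.parent z = some y →
      ((∃ u ∈ P.descSet z, (restrictG G ↑U).Adj u x) → P'.parent z = some x) ∧
      (¬(∃ u ∈ P.descSet z, (restrictG G ↑U).Adj u x) → P'.parent z = some y) := by
  intro z hzx hpz
  obtain ⟨hzU, -, hyz, hmin⟩ := (hP.2 z y).mp hpz
  obtain ⟨z₀, hz₀, hz₀z⟩ := exists_child hyz
  have hz₀x : z₀ ≠ x := child_ne_x hrot hz₀
  constructor
  · rintro ⟨u, hu, hadj⟩
    have hzu : T.Anc z u := proj_anc_imp hP (mem_descSet.mp hu)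
    have hmoved : IsMovedSub G T x z₀ := ⟨u, hz₀z.trans hzu, hadj.1⟩
    refine (hP'.2 z x).mpr ⟨hzU, hxU, ⟨Ne.symm hzx, ?_⟩, ?_⟩
    · apply (anc'_iff_ancF hrot).mpr
      left
      refine ⟨(anc_xy hrot).trans hyz.2, ?_⟩
      rintro ⟨-, hh | hh⟩
      · exact hyz.1 hh.symm
      · obtain ⟨z₁, -, hz₁, hz₁nm, hz₁z⟩ := hh
        exact hz₁nm ((siblings_disjoint hz₁ hz₀ hz₁z hz₀z) ▸ hmoved)
    · intro v hv hvz
      rcases (anc'_iff_ancF hrot).mp hvz.2 with ⟨hvzT, hside⟩ | ⟨-, -, hnyz⟩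
      swap
      · exact absurd hyz.2 hnyz
      by_cases hvx : v = x
      · rw [hvx]; exact Anc.refl _
      have hvy2 : T.Anc v y := hmin v hv ⟨hvz.1, hvzT⟩
      rcases hvy2.cases with h' | ⟨b, hb, hvb⟩
      · rw [h']; exact H1' hrot
      · rw [hrot.1] at hb; rw [← Option.some.inj hb] at hvb
        exact (anc'_iff_ancF hrot).mpr (Or.inl ⟨hvb, fun hp => hvx hp.1⟩)
  · intro hnex
    have hnm : ¬ IsMovedSub G T x z₀ := by
      rintro ⟨u1, hu1z₀, hu1adj⟩
      obtain ⟨u, huU, hPzu, huadj⟩ := L_door hG hT hU hrot hP hxU hyU hz₀ hu1z₀ hu1adj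
        hzU hpz hz₀z
      exact hnex ⟨u, mem_descSet.mpr hPzu,
        ⟨huadj, Finset.mem_coe.mpr huU, Finset.mem_coe.mpr hxU⟩⟩
    have hstay : InStay G T x y z := ⟨z₀, hz₀x, hz₀, hnm, hz₀z⟩
    refine (hP'.2 z y).mpr ⟨hzU, hyU, ⟨hyz.1, ?_⟩, ?_⟩
    · exact (anc'_iff_ancF hrot).mpr (Or.inl ⟨hyz.2, fun hp => xy_ne hrot hp.1.symm⟩)
    · intro v hv hvz
      rcases (anc'_iff_ancF hrot).mp hvz.2 with ⟨hvzT, hside⟩ | ⟨-, -, hnyz⟩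
      swap
      · exact absurd hyz.2 hnyz
      have hvnx : v ≠ x := fun hh => hside ⟨hh, Or.inr hstay⟩
      exact (anc'_iff_ancF hrot).mpr
        (Or.inl ⟨hmin v hv ⟨hvz.1, hvzT⟩, fun hp => hvnx hp.1⟩)

theorem inStay_y_ne {z : V} (hrot : IsRotationAt G T T' x y) (hst : InStay G T x y z) :
    y ≠ z ∧ T.Anc y z := by
  obtain ⟨z₁, -, hz₁, -, hz₁z⟩ := hst
  refine ⟨?_, (anc_of_parent hz₁).trans hz₁z⟩
  intro hyz
  have : z₁ = y := Anc.antisymm (hyz ▸ hz₁z) (anc_of_parent hz₁)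
  rw [this] at hz₁
  exact parent_ne_self y hz₁

theorem comp6 (hrot : IsRotationAt G T T' x y) (hP : IsProjOn T U P) (hP' : IsProjOn T' U P')
    (hxU : x ∈ U) (hyU : y ∈ U) :
    ∀ z : V, z ≠ y → z ≠ x → P.parent z ≠ some y → P'.parent z = P.parent z := by
  intro z hzy hzx hPz
  apply option_eq_of_some_iff
  intro w
  constructor
  · -- P'.parent z = some w → P.parent z = some w
    intro h'
    obtain ⟨hzU, hwU, hwz', hmin'⟩ := (hP'.2 z w).mp h'
    rcases (anc'_iff_ancF hrot).mp hwz'.2 with ⟨hwzT, hside⟩ | ⟨hwy, hxz, hnyz⟩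
    swap
    · -- w = y, x anc of z, y not anc of z : impossible
      exfalso
      have hxz' : T'.StrictAnc x z := by
        refine ⟨Ne.symm hzx, (anc'_iff_ancF hrot).mpr (Or.inl ⟨hxz, ?_⟩)⟩
        rintro ⟨-, hh | hh⟩
        · exact hzy hh
        · exact hnyz (inStay_y_ne hrot hh).2
      have hxw := hmin' x hxU hxz'
      rw [hwy] at hxw
      rcases (anc'_iff_ancF hrot).mp hxw with ⟨-, hside2⟩ | ⟨hxy2, -, -⟩
      · exact hside2 ⟨rfl, Or.inl rfl⟩
      · exact xy_ne hrot hxy2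
    -- main case
    refine (hP.2 z w).mpr ⟨hzU, hwU, ⟨hwz'.1, hwzT⟩, ?_⟩
    intro v hv hvzT
    by_cases hvx : v = x
    · by_cases hst : InStay G T x y z
      · obtain ⟨hynz, hyzT⟩ := inStay_y_ne hrot hst
        have hyz' : T'.StrictAnc y z :=
          ⟨hynz, (anc'_iff_ancF hrot).mpr (Or.inl ⟨hyzT, fun hp => xy_ne hrot hp.1.symm⟩)⟩
        rcases Anc.total hwzT hyzT with hwy2 | hyw
        · -- w anc of y or equal handled below
          rcases hwy2.cases with h' | ⟨b, hb, hwb⟩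
          · rw [hvx, h']
            exact (anc_xy hrot).trans (Anc.refl y)
          · rw [hrot.1] at hb; rw [← Option.some.inj hb] at hwb
            -- w anc of x : combine with min' on y
            rcases (anc'_iff_ancF hrot).mp (hmin' y hyU hyz') with ⟨hyw, -⟩ | ⟨-, hxw, -⟩
            · rw [hvx]; exact (anc_xy hrot).trans hyw
            · rw [hvx, Anc.antisymm hwb hxw]
              exact Anc.refl _
        · rw [hvx]; exact (anc_xy hrot).trans hyw
      · have hxz' : T'.StrictAnc x z := by
          refine ⟨Ne.symm hzx, (anc'_iff_ancF hrot).mpr (Or.inl ⟨hvx ▸ hvzT.2, ?_⟩)⟩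
          rintro ⟨-, hh | hh⟩
          · exact hzy hh
          · exact hst hh
        rcases (anc'_iff_ancF hrot).mp (hmin' x hxU hxz') with ⟨hxw, -⟩ | ⟨hxy2, -, -⟩
        · rw [hvx]; exact hxw
        · exact absurd hxy2 (xy_ne hrot)
    · have hvz' : T'.StrictAnc v z :=
        ⟨hvzT.1, (anc'_iff_ancF hrot).mpr (Or.inl ⟨hvzT.2, fun hp => hvx hp.1⟩)⟩
      rcases (anc'_iff_ancF hrot).mp (hmin' v hv hvz') with ⟨hvw, -⟩ | ⟨hvy, hxw, hnyw⟩
      · exact hvw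
      · -- v = y, x anc of w, y not anc of w
        have hyzT : T.Anc y z := hvy ▸ hvzT.2
        rcases Anc.total hwzT hyzT with hwy2 | hyw
        · rcases hwy2.cases with h' | ⟨b, hb, hwb⟩
          · rw [hvy, h']; exact Anc.refl _
          · rw [hrot.1] at hb; rw [← Option.some.inj hb] at hwb
            have hwex : w = x := Anc.antisymm hwb hxw
            -- impossible: show P.parent z = some y
            exfalso
            apply hPz
            refine (hP.2 z y).mpr ⟨hzU, hyU, ⟨Ne.symm hzy, hyzT⟩, ?_⟩
            intro v' hv' hv'z
            rcases Anc.total hv'z.2 hyzT with h1 | h2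
            · exact h1
            · by_cases hv'y : v' = y
              · rw [hv'y]; exact Anc.refl _
              · exfalso
                have hv'nx : v' ≠ x := by
                  intro hh
                  exact not_anc_yx hrot (hh ▸ h2)
                have hv'z' : T'.StrictAnc v' z :=
                  ⟨hv'z.1, (anc'_iff_ancF hrot).mpr (Or.inl ⟨hv'z.2, fun hp => hv'nx hp.1⟩)⟩
                have := hmin' v' hv' hv'z'
                rw [hwex] at this
                rcases (anc'_iff_ancF hrot).mp this with ⟨hv'xT, -⟩ | ⟨hv'y2, -, -⟩
                · exact not_anc_yx hrot (h2.trans hv'xT)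
                · exact hv'y hv'y2
        · rw [hvy]; exact hyw
  · -- P.parent z = some w → P'.parent z = some w
    intro h
    obtain ⟨hzU, hwU, hwzT, hmin⟩ := (hP.2 z w).mp h
    have hwny : w ≠ y := by
      intro hh
      rw [hh] at h
      exact hPz h
    refine (hP'.2 z w).mpr ⟨hzU, hwU, ⟨hwzT.1, ?_⟩, ?_⟩
    · apply (anc'_iff_ancF hrot).mpr
      left
      refine ⟨hwzT.2, ?_⟩
      rintro ⟨hwx2, hh | hh⟩
      · exact hzy hh
      · obtain ⟨hynz, hyzT⟩ := inStay_y_ne hrot hh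
        have := hmin y hyU ⟨hynz, hyzT⟩
        rw [hwx2] at this
        exact not_anc_yx hrot this
    · intro v hv hvz'
      rcases (anc'_iff_ancF hrot).mp hvz'.2 with ⟨hvzT, hside⟩ | ⟨hvy, hxz, hnyz⟩
      · have hvw : T.Anc v w := hmin v hv ⟨hvz'.1, hvzT⟩
        apply (anc'_iff_ancF hrot).mpr
        left
        refine ⟨hvw, ?_⟩
        rintro ⟨hvx2, hh | hh⟩
        · exact hwny hh
        · obtain ⟨z₁, ha, hb, hc, hz₁w⟩ := hh
          exact hside ⟨hvx2, Or.inr ⟨z₁, ha, hb, hc, hz₁w.trans hwzT.2⟩⟩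
      · rw [hvy]
        apply (anc'_iff_ancF hrot).mpr
        right
        refine ⟨rfl, hmin x hxU ⟨Ne.symm hzx, hxz⟩, ?_⟩
        intro hyw
        exact hnyz (hyw.trans hwzT.2)

theorem strict_iff_case2 (hG : G.IsTree) (hT : IsSTG G T)
    (hU : (G.induce (↑U : Set V)).Connected) (hrot : IsRotationAt G T T' x y)
    (hcase : x ∉ U ∨ y ∉ U) {u v : V} (hu : u ∈ U) (hv : v ∈ U) :
    T'.StrictAnc v u ↔ T.StrictAnc v u := by
  constructor
  · rintro ⟨hne, h⟩
    rcases (anc'_iff_ancF hrot).mp h with ⟨hT2, -⟩ | ⟨hvy, hxu, hnyu⟩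
    · exact ⟨hne, hT2⟩
    · exfalso
      have hyU : y ∈ U := hvy ▸ hv
      rcases hcase with hx | hy
      · exact L_GA2 hG hT hU hrot hyU hx hu hxu hnyu
      · exact hy hyU
  · rintro ⟨hne, hT2⟩
    refine ⟨hne, (anc'_iff_ancF hrot).mpr (Or.inl ⟨hT2, ?_⟩)⟩
    rintro ⟨hvx, hh | hh⟩
    · rcases hcase with hx | hy
      · exact hx (hvx ▸ hv)
      · exact hy (hh ▸ hu)
    · rcases hcase with hx | hy
      · exact hx (hvx ▸ hv)
      · obtain ⟨z₀, hz₀x, hz₀, hnm, hz₀u⟩ := hh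
        exact L_GA1 hG hT hU hrot (hvx ▸ hv) hy hz₀ hnm hu hz₀u

end Components
/-- projections commute with rotations. -/
theorem projection_rotation {V : Type} [Fintype V] [DecidableEq V]
    (G : SimpleGraph V) (hG : G.IsTree)
    (T T' : RTree V) (hT : IsSTG G T)
    (U : Finset V) (hU : (G.induce (↑U : Set V)).Connected)
    (x y : V) (hxy : T.parent y = some x)
    (hrot : IsRotationAt G T T' x y)
    (P P' : RTree V) (hP : IsProjOn T U P) (hP' : IsProjOn T' U P') :
    ((x ∈ U ∧ y ∈ U) → IsRotationAt (restrictG G ↑U) P P' x y) ∧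
    ((x ∉ U ∨ y ∉ U) → P' = P) := by
  have hS := strict_iff_case2 (T' := T') hG hT hU hrot
  constructor
  · rintro ⟨hxU, hyU⟩
    exact ⟨parent_proj hP hyU hxU hxy,
           by rw [hP'.1, hP.1, hrot.2.1],
           comp3 hrot hP hP' hxU hyU,
           parent_proj hP' hxU hyU hrot.2.2.2.1,
           comp5 hG hT hU hrot hP hP' hxU hyU,
           comp6 hrot hP hP' hxU hyU⟩
  · intro hcase
    refine RTree.ext' ?_ ?_
    · rw [hP'.1, hP.1, hrot.2.1]
    · funext z
      apply option_eq_of_some_iff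
      intro w
      constructor
      · intro h'
        obtain ⟨hzU, hwU, hwz', hmin'⟩ := (hP'.2 z w).mp h'
        refine (hP.2 z w).mpr ⟨hzU, hwU, (hS hcase hzU hwU).mp hwz', ?_⟩
        intro v hv hvz
        have hvw' := hmin' v hv ((hS hcase hzU hv).mpr hvz)
        by_cases hvw : v = w
        · rw [hvw]; exact RTree.Anc.refl _
        · exact ((hS hcase hwU hv).mp ⟨hvw, hvw'⟩).2
      · intro h'
        obtain ⟨hzU, hwU, hwz', hmin'⟩ := (hP.2 z w).mp h'
        refine (hP'.2 z w).mpr ⟨hzU, hwU, (hS hcase hzU hwU).mpr hwz', ?_⟩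
        intro v hv hvz
        have hvw' := hmin' v hv ((hS hcase hzU hv).mp hvz)
        by_cases hvw : v = w
        · rw [hvw]; exact RTree.Anc.refl _
        · exact ((hS hcase hwU hv).mpr ⟨hvw, hvw'⟩).2
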